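/- arXiv:math/0604535 — 3 statements merged into one kernel-verified Lean document; each statement's English description precedes it below -/
import Mathlib

section
/- Let (I, <) be a finite partially ordered set and let A = ℤ[v, v⁻¹] with the ring involution ¯ : A → A determined by v ↦ v⁻¹. Suppose (a_{x,y})_{x,y ∈ I} is a matrix with entries in A such that a_{x,x} = 1 for all x, a_{x,y} ≠ 0 implies y < x or y = x, and ∑_{z} ā_{x,z} a_{z,y} = δ_{x,y} for all x, y. Then there exists a unique family (c_{x,y})_{x,y ∈ I} with entries in ℤ[v] such that: c_{x,x} = 1; c_{x,y} ≠ 0 implies y < x or y = x; c_{x,y} ∈ vℤ[v] whenever x ≠ y; and c_{x,y} = ∑_{z} c̄_{x,z} a_{z,y} for all x, y. -/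
open LaurentPolynomial Polynomial Finset
open scoped Classical

noncomputable def posPart' (f : LaurentPolynomial ℤ) : Polynomial ℤ :=
  ⟨AddMonoidAlgebra.ofCoeff (Finsupp.comapDomain (Nat.cast : ℕ → ℤ) (f.coeff.filter (fun n => 0 < n))
    (Nat.cast_injective.injOn))⟩

lemma posPart'_coeff (f : LaurentPolynomial ℤ) (m : ℕ) :
    (posPart' f).coeff m = if 0 < (m : ℤ) then f.coeff m else 0 := by
  simp [posPart', Polynomial.coeff_ofFinsupp, Finsupp.comapDomain_apply, Finsupp.filter_apply]

lemma posPart'_zero : posPart' 0 = 0 := by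
  apply Polynomial.ext
  intro m
  rw [posPart'_coeff]
  simp

lemma toLaurent_apply' (p : Polynomial ℤ) (n : ℤ) :
    (Polynomial.toLaurent p).coeff n = if 0 ≤ n then p.coeff n.toNat else 0 := by
  rw [Polynomial.toLaurent_apply]
  show Finsupp.mapDomain _ _ n = _
  rcases le_or_gt 0 n with h | h
  · obtain ⟨m, rfl⟩ := Int.eq_ofNat_of_zero_le h
    rw [show ((m : ℕ) : ℤ) = Nat.cast m from rfl,
      Finsupp.mapDomain_apply Nat.cast_injective, if_pos h]
    simp [Polynomial.coeff]
  · rw [Finsupp.mapDomain_notin_range, if_neg (not_le.2 h)]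
    rintro ⟨m, rfl⟩
    omega

lemma posPart'_apply (f : LaurentPolynomial ℤ) (n : ℤ) :
    (Polynomial.toLaurent (posPart' f)).coeff n = if 0 < n then f.coeff n else 0 := by
  rw [toLaurent_apply']
  rcases le_or_gt 0 n with h | h
  · rw [if_pos h, posPart'_coeff, Int.toNat_of_nonneg h]
  · rw [if_neg (not_le.2 h), if_neg (by omega)]

lemma bar_eq_invert (bar : LaurentPolynomial ℤ →+* LaurentPolynomial ℤ)
    (hbar : ∀ n : ℤ, bar (LaurentPolynomial.T n) = LaurentPolynomial.T (-n))
    (f : LaurentPolynomial ℤ) : bar f = LaurentPolynomial.invert f := by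
  induction f using LaurentPolynomial.induction_on' with
  | add p q hp hq => rw [map_add, map_add, hp, hq]
  | C_mul_T n r =>
    have hC : bar (LaurentPolynomial.C r) = LaurentPolynomial.C r := by
      rw [LaurentPolynomial.C_eq_algebraMap, eq_intCast (algebraMap ℤ (LaurentPolynomial ℤ)) r]
      exact map_intCast bar r
    rw [map_mul, map_mul, hC, hbar, invert_C, invert_T]

lemma bar_apply (bar : LaurentPolynomial ℤ →+* LaurentPolynomial ℤ)
    (hbar : ∀ n : ℤ, bar (LaurentPolynomial.T n) = LaurentPolynomial.T (-n))
    (f : LaurentPolynomial ℤ) (n : ℤ) : (bar f).coeff n = f.coeff (-n) := by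
  rw [bar_eq_invert bar hbar]
  exact invert_apply f n

lemma bar_bar (bar : LaurentPolynomial ℤ →+* LaurentPolynomial ℤ)
    (hbar : ∀ n : ℤ, bar (LaurentPolynomial.T n) = LaurentPolynomial.T (-n))
    (f : LaurentPolynomial ℤ) : bar (bar f) = f := by
  rw [bar_eq_invert bar hbar, bar_eq_invert bar hbar]
  exact LaurentPolynomial.involutive_invert f

noncomputable def KLc {I : Type*} [Fintype I] [DecidableEq I] [PartialOrder I]
    (bar : LaurentPolynomial ℤ →+* LaurentPolynomial ℤ)
    (a : I → I → LaurentPolynomial ℤ) (x y : I) : Polynomial ℤ :=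
  if x = y then 1 else
    posPart' (∑ z ∈ (Finset.univ.filter (y < ·)).attach,
      bar (Polynomial.toLaurent (KLc bar a x z.1)) * a z.1 y)
termination_by (Finset.univ.filter (y < ·)).card
decreasing_by
  have hz : y < z.1 := (Finset.mem_filter.mp z.2).2
  apply Finset.card_lt_card
  constructor
  · intro w hw
    simp only [Finset.mem_filter, Finset.mem_univ, true_and] at hw ⊢
    exact lt_trans hz hw
  · intro hsub
    have := (Finset.mem_filter.mp (hsub (Finset.mem_filter.mpr ⟨Finset.mem_univ _, hz⟩))).2
    exact lt_irrefl _ this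

lemma KLc_def {I : Type*} [Fintype I] [DecidableEq I] [PartialOrder I]
    (bar : LaurentPolynomial ℤ →+* LaurentPolynomial ℤ)
    (a : I → I → LaurentPolynomial ℤ) (x y : I) :
    KLc bar a x y = if x = y then 1 else
      posPart' (∑ z ∈ Finset.univ.filter (y < ·),
        bar (Polynomial.toLaurent (KLc bar a x z)) * a z y) := by
  rw [KLc, Finset.sum_attach (Finset.univ.filter (y < ·))
    (fun z => bar (Polynomial.toLaurent (KLc bar a x z)) * a z y)]

/-- Kazhdan–Lusztig-type basis construction (§1.13). -/
theorem stmt0 {I : Type*} [Fintype I] [DecidableEq I] [PartialOrder I]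
    (bar : LaurentPolynomial ℤ →+* LaurentPolynomial ℤ)
    (hbar : ∀ n : ℤ, bar (LaurentPolynomial.T n) = LaurentPolynomial.T (-n))
    (a : I → I → LaurentPolynomial ℤ)
    (hdiag : ∀ x, a x x = 1)
    (htri : ∀ x y, a x y ≠ 0 → y < x ∨ y = x)
    (hunit : ∀ x y, ∑ z, bar (a x z) * a z y = if x = y then 1 else 0) :
    ∃! c : I → I → Polynomial ℤ,
      (∀ x, c x x = 1) ∧
      (∀ x y, c x y ≠ 0 → y < x ∨ y = x) ∧
      (∀ x y, x ≠ y → (c x y).coeff 0 = 0) ∧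
      (∀ x y, Polynomial.toLaurent (c x y) =
        ∑ z, bar (Polynomial.toLaurent (c x z)) * a z y) := by
  have hbarapp := bar_apply bar hbar
  have hbar2 := bar_bar bar hbar
  -- vanishing of a below the diagonal
  have hvan : ∀ z y : I, ¬ y ≤ z → a z y = 0 := by
    intro z y h
    by_contra h0
    rcases htri z y h0 with h1 | h1
    · exact h h1.le
    · exact h h1.le
  -- splitting sums over the interval above y
  have split : ∀ (g : I → LaurentPolynomial ℤ) (y : I), (∀ z, ¬ y ≤ z → g z = 0) →
      ∑ z, g z = g y + ∑ z ∈ Finset.univ.filter (y < ·), g z := by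
    intro g y h
    have e1 : ∑ z, g z = ∑ z ∈ Finset.univ.filter (y ≤ ·), g z :=
      (Finset.sum_subset (Finset.subset_univ _) (fun z _ hz => h z (by simpa using hz))).symm
    have e2 : Finset.univ.filter (y ≤ ·) = insert y (Finset.univ.filter (y < ·)) := by
      ext z
      simp only [Finset.mem_filter, Finset.mem_univ, true_and, Finset.mem_insert]
      rw [le_iff_lt_or_eq, or_comm, eq_comm]
    rw [e1, e2, Finset.sum_insert (by simp)]
  -- the "other side" unitarity
  have hunit' : ∀ x y, ∑ z, a x z * bar (a z y) = if x = y then 1 else 0 := by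
    have hBA : (Matrix.of fun x z => bar (a x z)) * (Matrix.of a) = 1 := by
      refine Matrix.ext fun x y => ?_
      simp only [Matrix.mul_apply, Matrix.of_apply, Matrix.one_apply]
      exact hunit x y
    have hAB : (Matrix.of a) * (Matrix.of fun x z => bar (a x z)) = 1 :=
      mul_eq_one_comm.mpr hBA
    intro x y
    have := congrFun (congrFun hAB x) y
    simpa [Matrix.mul_apply, Matrix.one_apply] using this
  -- coefficient zero of KLc off the diagonal
  have hc0 : ∀ x y : I, x ≠ y → (KLc bar a x y).coeff 0 = 0 := by
    intro x y hxy
    rw [KLc_def, if_neg hxy, posPart'_coeff]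
    simp
  -- the main induction: triangularity and the defining equation
  have main : ∀ y x : I, (KLc bar a x y ≠ 0 → y < x ∨ y = x) ∧
      (Polynomial.toLaurent (KLc bar a x y) =
        ∑ z, bar (Polynomial.toLaurent (KLc bar a x z)) * a z y) := by
    intro y
    refine (wellFounded_gt (α := I)).induction
      (C := fun y => ∀ x : I, (KLc bar a x y ≠ 0 → y < x ∨ y = x) ∧
        (Polynomial.toLaurent (KLc bar a x y) =
          ∑ z, bar (Polynomial.toLaurent (KLc bar a x z)) * a z y)) y ?_
    clear y
    intro y IH
    have htc : ∀ x, KLc bar a x y ≠ 0 → y < x ∨ y = x := by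
      intro x hc
      by_contra hcon
      push_neg at hcon
      obtain ⟨h1, h2⟩ := hcon
      apply hc
      rw [KLc_def, if_neg (fun h => h2 h.symm)]
      have hF0 : (∑ z ∈ Finset.univ.filter (y < ·),
          bar (Polynomial.toLaurent (KLc bar a x z)) * a z y) = 0 := by
        apply Finset.sum_eq_zero
        intro z hz
        have hyz : y < z := (Finset.mem_filter.mp hz).2
        by_cases hzc : KLc bar a x z = 0
        · simp [hzc]
        · rcases (IH z hyz x).1 hzc with h3 | h3
          · exact absurd (lt_trans hyz h3) h1
          · exact absurd (h3 ▸ hyz) h1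
      rw [hF0, posPart'_zero]
    refine fun x => ⟨htc x, ?_⟩
    have hsplit : (∑ z, bar (Polynomial.toLaurent (KLc bar a x z)) * a z y)
        = bar (Polynomial.toLaurent (KLc bar a x y)) * a y y
          + ∑ z ∈ Finset.univ.filter (y < ·),
            bar (Polynomial.toLaurent (KLc bar a x z)) * a z y :=
      split (fun z => bar (Polynomial.toLaurent (KLc bar a x z)) * a z y) y
        (fun z hz => by simp [hvan z y hz])
    by_cases hxy : x = y
    · -- diagonal case
      have hdiagc : KLc bar a x y = 1 := by rw [KLc_def, if_pos hxy]
      have hFyy : (∑ z ∈ Finset.univ.filter (y < ·),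
          bar (Polynomial.toLaurent (KLc bar a x z)) * a z y) = 0 := by
        apply Finset.sum_eq_zero
        intro z hz
        have hyz : y < z := (Finset.mem_filter.mp hz).2
        by_cases hzc : KLc bar a x z = 0
        · simp [hzc]
        · rcases (IH z hyz x).1 hzc with h3 | h3
          · exact absurd h3 (by rw [hxy]; exact lt_asymm hyz)
          · exact absurd (h3.trans hxy) hyz.ne'
      rw [hsplit, hFyy, add_zero, hdiagc, hdiag y]
      simp
    · -- off-diagonal case
      have hcdef : KLc bar a x y = posPart' (∑ z ∈ Finset.univ.filter (y < ·),
          bar (Polynomial.toLaurent (KLc bar a x z)) * a z y) := by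
        rw [KLc_def, if_neg hxy]
      set F := ∑ z ∈ Finset.univ.filter (y < ·),
        bar (Polynomial.toLaurent (KLc bar a x z)) * a z y with hFdef
      have hanti : bar F = -F := by
        conv_lhs => rw [hFdef]
        rw [map_sum]
        have step1 : ∀ z ∈ Finset.univ.filter (y < ·),
            bar (bar (Polynomial.toLaurent (KLc bar a x z)) * a z y)
            = (∑ w, bar (Polynomial.toLaurent (KLc bar a x w)) * a w z) * bar (a z y) := by
          intro z hz
          rw [map_mul, hbar2, (IH z (Finset.mem_filter.mp hz).2 x).2]
        rw [Finset.sum_congr rfl step1]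
        calc ∑ z ∈ Finset.univ.filter (y < ·),
              (∑ w, bar (Polynomial.toLaurent (KLc bar a x w)) * a w z) * bar (a z y)
            = ∑ z ∈ Finset.univ.filter (y < ·),
              ∑ w, bar (Polynomial.toLaurent (KLc bar a x w)) * a w z * bar (a z y) := by
              simp_rw [Finset.sum_mul]
          _ = ∑ w, ∑ z ∈ Finset.univ.filter (y < ·),
              bar (Polynomial.toLaurent (KLc bar a x w)) * a w z * bar (a z y) :=
              Finset.sum_comm
          _ = ∑ w, bar (Polynomial.toLaurent (KLc bar a x w)) *
              (∑ z ∈ Finset.univ.filter (y < ·), a w z * bar (a z y)) := by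
              simp_rw [Finset.mul_sum, mul_assoc]
          _ = ∑ w, bar (Polynomial.toLaurent (KLc bar a x w)) *
              ((if w = y then 1 else 0) - a w y) := by
              refine Finset.sum_congr rfl fun w _ => ?_
              congr 1
              have hs : (∑ z, a w z * bar (a z y))
                  = a w y * bar (a y y)
                    + ∑ z ∈ Finset.univ.filter (y < ·), a w z * bar (a z y) :=
                split (fun z => a w z * bar (a z y)) y
                  (fun z hz => by simp [hvan z y hz])
              have hu := hunit' w y
              rw [hs] at hu
              have h5 : ∑ z ∈ Finset.univ.filter (y < ·), a w z * bar (a z y)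
                  = (if w = y then 1 else 0) - a w y * bar (a y y) := eq_sub_of_add_eq' hu
              rw [h5, hdiag, map_one, mul_one]
          _ = (∑ w, bar (Polynomial.toLaurent (KLc bar a x w)) * (if w = y then 1 else 0))
              - ∑ w, bar (Polynomial.toLaurent (KLc bar a x w)) * a w y := by
              rw [← Finset.sum_sub_distrib]
              simp_rw [mul_sub]
          _ = bar (Polynomial.toLaurent (KLc bar a x y))
              - (bar (Polynomial.toLaurent (KLc bar a x y)) * a y y + F) := by
              have hA : (∑ w, bar (Polynomial.toLaurent (KLc bar a x w)) * (if w = y then 1 else 0))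
                  = bar (Polynomial.toLaurent (KLc bar a x y)) := by
                simp [mul_ite, Finset.sum_ite_eq']
              have hB : (∑ w, bar (Polynomial.toLaurent (KLc bar a x w)) * a w y)
                  = bar (Polynomial.toLaurent (KLc bar a x y)) * a y y
                    + ∑ w ∈ Finset.univ.filter (y < ·),
                      bar (Polynomial.toLaurent (KLc bar a x w)) * a w y :=
                split (fun w => bar (Polynomial.toLaurent (KLc bar a x w)) * a w y) y
                  (fun w hw => by simp [hvan w y hw])
              rw [hA, hB, ← hFdef]
          _ = -F := by rw [hdiag, mul_one]; ring
      have hF : ∀ n : ℤ, F.coeff (-n) = -(F.coeff n) := by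
        intro n
        have h1 : (bar F).coeff n = (-F).coeff n := by rw [hanti]
        rw [hbarapp F n, AddMonoidAlgebra.coeff_neg, Finsupp.neg_apply] at h1
        exact h1
      have hF0 : F.coeff 0 = 0 := by
        have h : F.coeff (-0) = -(F.coeff 0) := hF 0
        rw [neg_zero] at h
        omega
      rw [hsplit, hcdef, hdiag, mul_one]
      apply LaurentPolynomial.ext
      intro n
      rw [AddMonoidAlgebra.coeff_add, Finsupp.add_apply, posPart'_apply, hbarapp, posPart'_apply]
      rcases lt_trichotomy n 0 with h | h | h
      · rw [if_neg (by omega), if_pos (by omega), hF n]; ring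
      · subst h
        rw [if_neg (by omega), if_neg (by omega), hF0]
        ring
      · rw [if_pos h, if_neg (by omega)]; ring
  refine ⟨KLc bar a, ⟨fun x => by rw [KLc_def, if_pos rfl],
    fun x y => (main y x).1, hc0, fun x y => (main y x).2⟩, ?_⟩
  rintro c' ⟨h1, h2, h3, h4⟩
  have uniq : ∀ y x : I, c' x y = KLc bar a x y := by
    intro y
    refine (wellFounded_gt (α := I)).induction
      (C := fun y => ∀ x : I, c' x y = KLc bar a x y) y ?_
    clear y
    intro y IH x
    by_cases hxy : x = y
    · rw [hxy, h1 y, KLc_def, if_pos rfl]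
    · have e1 : Polynomial.toLaurent (c' x y)
          = bar (Polynomial.toLaurent (c' x y)) * a y y
            + ∑ z ∈ Finset.univ.filter (y < ·), bar (Polynomial.toLaurent (c' x z)) * a z y :=
        (h4 x y).trans (split (fun z => bar (Polynomial.toLaurent (c' x z)) * a z y) y
          (fun z hz => by simp [hvan z y hz]))
      have e1' : ∑ z ∈ Finset.univ.filter (y < ·),
          bar (Polynomial.toLaurent (c' x z)) * a z y
          = ∑ z ∈ Finset.univ.filter (y < ·),
            bar (Polynomial.toLaurent (KLc bar a x z)) * a z y :=
        Finset.sum_congr rfl fun z hz => by rw [IH z (Finset.mem_filter.mp hz).2 x]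
      have e1'' : Polynomial.toLaurent (c' x y)
          = bar (Polynomial.toLaurent (c' x y))
            + ∑ z ∈ Finset.univ.filter (y < ·),
              bar (Polynomial.toLaurent (KLc bar a x z)) * a z y := by
        conv_lhs => rw [e1, e1']
        rw [hdiag, mul_one]
      have e2'' : Polynomial.toLaurent (KLc bar a x y)
          = bar (Polynomial.toLaurent (KLc bar a x y))
            + ∑ z ∈ Finset.univ.filter (y < ·),
              bar (Polynomial.toLaurent (KLc bar a x z)) * a z y := by
        have h6 : Polynomial.toLaurent (KLc bar a x y)
            = bar (Polynomial.toLaurent (KLc bar a x y)) * a y y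
              + ∑ z ∈ Finset.univ.filter (y < ·),
                bar (Polynomial.toLaurent (KLc bar a x z)) * a z y := (main y x).2.trans
          (split (fun z => bar (Polynomial.toLaurent (KLc bar a x z)) * a z y) y
            (fun z hz => by simp [hvan z y hz]))
        conv_lhs => rw [h6]
        rw [hdiag, mul_one]
      have e3 : Polynomial.toLaurent (c' x y) - Polynomial.toLaurent (KLc bar a x y)
          = bar (Polynomial.toLaurent (c' x y) - Polynomial.toLaurent (KLc bar a x y)) := by
        conv_lhs => rw [e1'', e2'']
        rw [map_sub]
        ring
      have hd : Polynomial.toLaurent (c' x y) - Polynomial.toLaurent (KLc bar a x y)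
          = Polynomial.toLaurent (c' x y - KLc bar a x y) := (map_sub _ _ _).symm
      have hzero : Polynomial.toLaurent (c' x y - KLc bar a x y) = 0 := by
        have hgneg : ∀ n : ℤ, n < 0 →
            (Polynomial.toLaurent (c' x y - KLc bar a x y)).coeff n = 0 := by
          intro n hn
          rw [toLaurent_apply', if_neg (not_le.2 hn)]
        have hg0 : (Polynomial.toLaurent (c' x y - KLc bar a x y)).coeff (0 : ℤ) = 0 := by
          rw [toLaurent_apply', if_pos le_rfl]
          simp [Polynomial.coeff_sub, h3 x y hxy, hc0 x y hxy]
        apply LaurentPolynomial.ext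
        intro n
        rcases lt_trichotomy n 0 with h | h | h
        · rw [hgneg n h]; simp
        · rw [h, hg0]; simp
        · have hsym : (Polynomial.toLaurent (c' x y - KLc bar a x y)).coeff n
              = (Polynomial.toLaurent (c' x y - KLc bar a x y)).coeff (-n) := by
            conv_lhs => rw [← hd, e3]
            rw [hbarapp, hd]
          rw [hsym, hgneg (-n) (by omega)]; simp
      have : c' x y - KLc bar a x y = 0 := Polynomial.toLaurent_eq_zero.mp hzero
      exact sub_eq_zero.mp this
  exact funext fun x => funext fun y => uniq y x
end

section
/- Let θ ∈ ℤ[v] be a polynomial with constant term 1, let δ ∈ ℤ, and let f ∈ ℤ[v, v⁻¹] be a Laurent polynomial. Viewing θ as an invertible element of the power series ring ℤ[[v]], if θ⁻¹ · f ∈ δ + vℤ[[v]], then f ∈ δ + vℤ[v]; that is, f is a genuine polynomial in v with constant term δ. -/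
lemma stmt1_aux (f : LaurentPolynomial ℤ) (hneg : ∀ n : ℤ, n < 0 → f.coeff n = 0) :
    Polynomial.toLaurent (LaurentPolynomial.trunc f) = f := by
  apply AddMonoidAlgebra.coeff_injective
  show Finsupp.mapDomain _ _ = f.coeff
  have : ((Polynomial.toFinsuppIso ℤ) (LaurentPolynomial.trunc f)).coeff
      = Finsupp.comapDomain Int.ofNat f.coeff Int.ofNat_injective.injOn := by
    rfl
  erw [this]
  apply Finsupp.mapDomain_comapDomain _ Int.ofNat_injective
  intro n hn
  simp only [Finsupp.mem_support_iff, Finset.mem_coe] at hn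
  rcases le_or_gt 0 n with h0 | h0
  · exact ⟨n.toNat, by simpa using Int.toNat_of_nonneg h0⟩
  · exact absurd (hneg n h0) hn

/-- Key arithmetic lemma from the proof of 2.14(b): if `θ ∈ ℤ[v]` has constant term 1,
`f` is a Laurent polynomial, and `θ⁻¹ · f ∈ δ + vℤ⟦v⟧` (i.e. `f = θ · s` in `ℤ((v))` for a
power series `s` with constant term `δ`), then `f` is a polynomial with constant term `δ`. -/
theorem stmt1 (θ : Polynomial ℤ) (hθ : θ.coeff 0 = 1) (δ : ℤ)
    (f : LaurentPolynomial ℤ)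
    (h : ∃ s : PowerSeries ℤ, PowerSeries.constantCoeff s = δ ∧
      ∀ n : ℤ, f.coeff n = if 0 ≤ n then
        PowerSeries.coeff n.toNat ((θ : PowerSeries ℤ) * s) else 0) :
    ∃ p : Polynomial ℤ, f = Polynomial.toLaurent p ∧ p.coeff 0 = δ := by
  obtain ⟨s, hs, hf⟩ := h
  refine ⟨LaurentPolynomial.trunc f, (stmt1_aux f fun n hn => by
    rw [hf n, if_neg (not_le.mpr hn)]).symm, ?_⟩
  have hc : (LaurentPolynomial.trunc f).coeff 0 = f.coeff 0 := rfl
  rw [hc, hf 0, if_pos le_rfl]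
  have : (PowerSeries.coeff (0:ℤ).toNat) ((θ : PowerSeries ℤ) * s)
      = PowerSeries.constantCoeff ((θ : PowerSeries ℤ) * s) := by
    simp [PowerSeries.coeff_zero_eq_constantCoeff]
  rw [this, map_mul, hs]
  simp [hθ]
end

section
/- Let A = ℤ[v,v⁻¹] with bar involution v ↦ v⁻¹, let M be a free ℤ[v]-module with finite basis (W_u)_{u ∈ U}, let K = ℚ(v) ⊗_{ℤ[v]} M, and let β : K → K be the bar-semilinear involution determined by β(W_u) = W_u for all u. Suppose (z_u)_{u ∈ U} is another family in M with z_u ≡ W_u mod vM for all u. Then for every u ∈ U, W_u is the unique element x ∈ M satisfying β(x) = x and x ≡ z_u mod vM. -/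
/-- `r ∈ ℚ(v)` lies in `ℤ[v]`. -/
def inZPoly (r : RatFunc ℚ) : Prop :=
  ∃ p : Polynomial ℤ, r = algebraMap (Polynomial ℚ) (RatFunc ℚ) (p.map (Int.castRingHom ℚ))

/-- `r ∈ ℚ(v)` lies in `vℤ[v]`. -/
def inVZPoly (r : RatFunc ℚ) : Prop :=
  ∃ p : Polynomial ℤ,
    r = algebraMap (Polynomial ℚ) (RatFunc ℚ) (Polynomial.X * p.map (Int.castRingHom ℚ))

open Polynomial

lemma stmt11_amap_eq : (algebraMap (Polynomial ℚ) (RatFunc ℚ)) =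
    eval₂RingHom (algebraMap ℚ (RatFunc ℚ)) RatFunc.X := by
  apply Polynomial.ringHom_ext
  · intro a
    simp [RatFunc.algebraMap_C, RatFunc.algebraMap_eq_C]
  · simp [RatFunc.algebraMap_X]

lemma stmt11_vz_add {r s : RatFunc ℚ} (hr : inVZPoly r) (hs : inVZPoly s) :
    inVZPoly (r + s) := by
  obtain ⟨p, hp⟩ := hr; obtain ⟨q, hq⟩ := hs
  exact ⟨p + q, by rw [hp, hq, ← map_add]; rw [Polynomial.map_add, mul_add]⟩

lemma stmt11_vz_neg {r : RatFunc ℚ} (hr : inVZPoly r) : inVZPoly (-r) := by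
  obtain ⟨p, hp⟩ := hr
  exact ⟨-p, by rw [hp, ← map_neg]; rw [Polynomial.map_neg, mul_neg]⟩

/-- A bar-fixed element of ℤ[v] is a constant. -/
lemma stmt11_const (barQ : RatFunc ℚ →+* RatFunc ℚ)
    (hbarX : barQ RatFunc.X = (RatFunc.X)⁻¹) {r : RatFunc ℚ}
    (h1 : inZPoly r) (h2 : barQ r = r) :
    ∃ c : ℚ, r = algebraMap ℚ (RatFunc ℚ) c := by
  obtain ⟨p, hp⟩ := h1
  set q : Polynomial ℚ := p.map (Int.castRingHom ℚ) with hq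
  rcases eq_or_ne q 0 with h0 | h0
  · exact ⟨0, by rw [hp, h0, map_zero, map_zero]⟩
  have hbar : barQ r = eval₂ (algebraMap ℚ (RatFunc ℚ)) (RatFunc.X)⁻¹ q := by
    rw [hp, stmt11_amap_eq, coe_eval₂RingHom, hom_eval₂, hbarX]
    congr 1
    apply Subsingleton.elim
  have hXne : (RatFunc.X : RatFunc ℚ) ≠ 0 := RatFunc.X_ne_zero
  have hXine : (RatFunc.X : RatFunc ℚ)⁻¹ ≠ 0 := inv_ne_zero hXne
  letI : Invertible ((RatFunc.X : RatFunc ℚ)⁻¹) := invertibleOfNonzero hXine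
  have hrev := eval₂_reverse_mul_pow (algebraMap ℚ (RatFunc ℚ)) ((RatFunc.X : RatFunc ℚ)⁻¹) q
  rw [invOf_eq_inv, inv_inv] at hrev
  -- hrev : eval₂ i X q.reverse * (X⁻¹)^d = eval₂ i X⁻¹ q
  have hec : ∀ f : Polynomial ℚ, eval₂ (algebraMap ℚ (RatFunc ℚ)) RatFunc.X f
      = algebraMap (Polynomial ℚ) (RatFunc ℚ) f := by
    intro f; rw [stmt11_amap_eq, coe_eval₂RingHom]
  rw [hec] at hrev
  have key : algebraMap (Polynomial ℚ) (RatFunc ℚ) (q * X ^ q.natDegree)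
      = algebraMap (Polynomial ℚ) (RatFunc ℚ) q.reverse := by
    have : r = algebraMap (Polynomial ℚ) (RatFunc ℚ) q.reverse * (RatFunc.X)⁻¹ ^ q.natDegree := by
      rw [hrev, ← hbar, h2]
    rw [map_mul, map_pow, RatFunc.algebraMap_X]
    rw [hp] at this
    field_simp [hXne] at this
    rw [this, one_div, inv_pow, mul_assoc, inv_mul_cancel₀ (pow_ne_zero _ hXne), mul_one]
  have keyq : q * X ^ q.natDegree = q.reverse := RatFunc.algebraMap_injective ℚ key
  have hdeg : q.natDegree + q.natDegree ≤ q.natDegree := by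
    calc q.natDegree + q.natDegree = (q * X ^ q.natDegree).natDegree := by
          rw [natDegree_mul h0 (pow_ne_zero _ X_ne_zero), natDegree_X_pow]
      _ = q.reverse.natDegree := by rw [keyq]
      _ ≤ q.natDegree := q.reverse_natDegree_le
  have : q.natDegree = 0 := by omega
  refine ⟨q.coeff 0, ?_⟩
  rw [hp, eq_C_of_natDegree_eq_zero this, RatFunc.algebraMap_C]
  simp [RatFunc.algebraMap_eq_C]

/-- §4.7: characterization of the canonical basis. Model: `K = U → ℚ(v)` with standard
basis `W_u = Pi.single u 1`, `M` the `ℤ[v]`-span of the `W_u` (coordinatewise `ℤ[v]`),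
and `β` the coordinatewise bar involution, which fixes each `W_u`. Given a family
`z u ∈ M` with `z u ≡ W u mod vM`, each `W u` is the unique bar-fixed element of `M`
congruent to `z u mod vM`. -/
theorem stmt11 {U : Type*} [Fintype U] [DecidableEq U]
    (barQ : RatFunc ℚ →+* RatFunc ℚ)
    (hbarX : barQ RatFunc.X = (RatFunc.X)⁻¹)
    (hbar2 : ∀ r, barQ (barQ r) = r)
    (z : U → U → RatFunc ℚ)
    (hzM : ∀ u u', inZPoly (z u u'))
    (hz : ∀ u u', inVZPoly (z u u' - (Pi.single u 1 : U → RatFunc ℚ) u')) :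
    ∀ u : U, ∀ x : U → RatFunc ℚ,
      ((∀ u', inZPoly (x u')) ∧ (∀ u', barQ (x u') = x u') ∧
        (∀ u', inVZPoly (x u' - z u u'))) ↔ x = (Pi.single u 1 : U → RatFunc ℚ) := by
  intro u x
  constructor
  · rintro ⟨hZ, hB, hV⟩
    funext u'
    obtain ⟨c, hc⟩ := stmt11_const barQ hbarX (hZ u') (hB u')
    -- x u' - W u u' ∈ vℤ[v]
    have hxW : inVZPoly (x u' - (Pi.single u 1 : U → RatFunc ℚ) u') := by
      have := stmt11_vz_add (hV u') (hz u u')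
      simpa using this
    -- W u u' is a constant δ
    have hWc : ∃ d : ℚ, (Pi.single u 1 : U → RatFunc ℚ) u' = algebraMap ℚ (RatFunc ℚ) d := by
      rcases eq_or_ne u' u with h | h
      · subst h; exact ⟨1, by simp⟩
      · exact ⟨0, by simp [Pi.single_eq_of_ne h]⟩
    obtain ⟨d, hd⟩ := hWc
    obtain ⟨p, hpv⟩ := hxW
    have : algebraMap (Polynomial ℚ) (RatFunc ℚ) (C c - C d)
        = algebraMap (Polynomial ℚ) (RatFunc ℚ) (X * p.map (Int.castRingHom ℚ)) := by
      rw [← hpv, hc, hd, map_sub, RatFunc.algebraMap_C, RatFunc.algebraMap_C]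
      simp [RatFunc.algebraMap_eq_C]
    have hpoly : (C c - C d : Polynomial ℚ) = X * p.map (Int.castRingHom ℚ) :=
      RatFunc.algebraMap_injective ℚ this
    have hcd : c = d := by
      have h2 := congrArg (fun f => Polynomial.coeff f 0) hpoly
      simp only [coeff_sub, coeff_C_zero, mul_comm, coeff_mul_X, coeff_zero] at h2
      have : c - d = 0 := by simpa using h2
      linarith
    rw [hc, hd, hcd]
  · rintro rfl
    refine ⟨?_, ?_, ?_⟩
    · intro u'
      rcases eq_or_ne u' u with h | h
      · subst h; exact ⟨1, by simp⟩
      · exact ⟨0, by simp [Pi.single_eq_of_ne h]⟩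
    · intro u'
      rcases eq_or_ne u' u with h | h
      · subst h; simp
      · simp [Pi.single_eq_of_ne h]
    · intro u'
      have := stmt11_vz_neg (hz u u')
      simpa [neg_sub] using this
end
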